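/- A subset B of the 2-sphere S² is the set of limit points of some discrete-in-its-complement countable set D (i.e., B = B(X) for some codiscrete X = S² \ D) if and only if B is closed and has topological dimension at most 1. -/

import Mathlib

open Set Function Topology Filter

/-- The 2-sphere, as the unit sphere in ℝ³. -/
abbrev Sphere2 : Set (EuclideanSpace ℝ (Fin 3)) := Metric.sphere 0 1

section Aux

variable {α : Type*} [MetricSpace α]

lemma aux_nhds_diff_eq {D : Set α} {x : α} :
    𝓝[≠] x ⊓ 𝓟 D = 𝓝 x ⊓ 𝓟 (D \ {x}) := by
  rw [nhdsWithin, inf_assoc, inf_principal]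
  congr 2
  ext y
  simp [Set.mem_diff, and_comm]

/-- The derived set of any set is closed (in a T1 space). -/
lemma aux_derived_closed (D : Set α) :
    IsClosed {x : α | ClusterPt x (𝓟 (D \ {x}))} := by
  rw [← isOpen_compl_iff, isOpen_iff_forall_mem_open]
  intro x hx
  simp only [mem_compl_iff, mem_setOf_eq, clusterPt_principal_iff] at hx
  push_neg at hx
  obtain ⟨U, hU, hUD⟩ := hx
  obtain ⟨V, hVU, hVo, hxV⟩ := mem_nhds_iff.1 hU
  refine ⟨V, ?_, hVo, hxV⟩
  intro y hy
  simp only [mem_compl_iff, mem_setOf_eq, clusterPt_principal_iff]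
  push_neg
  by_cases hyx : y = x
  · subst hyx; exact ⟨U, hU, hUD⟩
  · refine ⟨V \ {x}, (hVo.sdiff isClosed_singleton).mem_nhds ⟨hy, hyx⟩, ?_⟩
    rw [eq_empty_iff_forall_notMem]
    rintro z ⟨⟨hzV, hzx⟩, hzD, -⟩
    exact eq_empty_iff_forall_notMem.1 hUD z ⟨hVU hzV, hzD, hzx⟩

lemma aux_not_cluster_of_discrete {D : Set α} (hD : DiscreteTopology ↥D) {x : α}
    (hx : x ∈ D) : ¬ ClusterPt x (𝓟 (D \ {x})) := by
  have h := discreteTopology_subtype_iff.1 hD x hx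
  rw [aux_nhds_diff_eq] at h
  intro hc
  exact Filter.NeBot.ne hc h

end Aux

/-- A subset `B` of `S²` is the set of limit points of some countable set `D`
that is discrete as a subspace (the bad set of the codiscrete set `S² \ D`)
if and only if `B` is closed and has dimension at most 1, i.e. (being closed)
has empty interior in `S²`. -/
theorem stmt_11 (B : Set ↥Sphere2) :
    (∃ D : Set ↥Sphere2, D.Countable ∧ DiscreteTopology ↥D ∧
      B = {x : ↥Sphere2 | ClusterPt x (𝓟 (D \ {x}))}) ↔
    (IsClosed B ∧ interior B = ∅) := by
  constructor
  · rintro ⟨D, hDc, hDd, rfl⟩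
    refine ⟨aux_derived_closed D, ?_⟩
    by_contra h
    rw [← ne_eq, ← nonempty_iff_ne_empty] at h
    obtain ⟨x, hx⟩ := h
    have hxB := interior_subset hx
    simp only [mem_setOf_eq] at hxB
    obtain ⟨y, hyI, hyD, -⟩ :=
      clusterPt_principal_iff.1 hxB _ (isOpen_interior.mem_nhds hx)
    have hyB := interior_subset hyI
    simp only [mem_setOf_eq] at hyB
    exact aux_not_cluster_of_discrete hDd hyD hyB
  · rintro ⟨hBc, hBi⟩
    by_cases hBne : B.Nonempty
    swap
    · rw [not_nonempty_iff_eq_empty] at hBne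
      subst hBne
      refine ⟨∅, countable_empty, ?_, ?_⟩
      · exact discreteTopology_subtype_iff.2 (fun x hx => absurd hx (notMem_empty x))
      · ext x
        simp only [mem_empty_iff_false, mem_setOf_eq, false_iff, empty_diff,
          principal_empty]
        intro hc
        exact (Filter.NeBot.ne hc) (by simp)
    · -- B nonempty, closed, with empty interior
      obtain ⟨s, hsc, hsd⟩ := TopologicalSpace.exists_countable_dense ↥B
      set Q : Set ↥Sphere2 := Subtype.val '' s with hQdef
      have hQB : Q ⊆ B := by rintro q ⟨⟨y, hy⟩, -, rfl⟩; exact hy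
      have hQc : Q.Countable := hsc.image _
      have hBQ : ∀ b ∈ B, b ∈ closure Q := by
        intro b hb
        have := hsd ⟨b, hb⟩
        rwa [closure_subtype] at this
      have hQne : Q.Nonempty := by
        obtain ⟨b, hb⟩ := hBne
        have hc := hBQ b hb
        by_contra h
        rw [not_nonempty_iff_eq_empty] at h
        rw [h, closure_empty] at hc
        exact hc
      obtain ⟨f, hf⟩ := hQc.exists_eq_range hQne
      set bseq : ℕ → ↥Sphere2 := fun k => f (Nat.unpair k).1 with hbseq
      have hbB : ∀ k, bseq k ∈ B := by
        intro k
        apply hQB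
        rw [hf]
        exact mem_range_self _
      have hcompl : Dense Bᶜ := interior_eq_empty_iff_dense_compl.1 hBi
      have hex : ∀ k : ℕ, ∃ y, y ∉ B ∧ dist y (bseq k) < 1 / (k + 1) := by
        intro k
        have h1 : (0 : ℝ) < 1 / (k + 1) := by positivity
        obtain ⟨y, hy, hdy⟩ := Metric.mem_closure_iff.1 (hcompl (bseq k)) _ h1
        exact ⟨y, hy, by rwa [dist_comm]⟩
      choose d hdB hdd using hex
      have key1 : ∀ x, x ∉ B → ¬ ClusterPt x (𝓟 (range d \ {x})) := by
        intro x hx hcl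
        have hr : 0 < Metric.infDist x B := (hBc.notMem_iff_infDist_pos hBne).1 hx
        set r := Metric.infDist x B with hrdef
        obtain ⟨N, hN⟩ := exists_nat_one_div_lt (show (0:ℝ) < r / 2 by positivity)
        have hsub : ∀ k : ℕ, d k ∈ Metric.ball x (r / 2) → k < N := by
          intro k hk
          by_contra hkN
          push_neg at hkN
          have h1 : Metric.infDist (d k) B < 1 / (k + 1) :=
            lt_of_le_of_lt (Metric.infDist_le_dist_of_mem (hbB k)) (hdd k)
          have h2 : r ≤ Metric.infDist (d k) B + dist x (d k) :=
            Metric.infDist_le_infDist_add_dist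
          have h3 : dist x (d k) < r / 2 := by
            rw [Metric.mem_ball] at hk
            rwa [dist_comm]
          have h4 : 1 / ((k : ℝ) + 1) ≤ 1 / ((N : ℝ) + 1) := by
            apply one_div_le_one_div_of_le (by positivity)
            have : (N : ℝ) ≤ (k : ℝ) := by exact_mod_cast hkN
            linarith
          linarith
        set F : Set ↥Sphere2 := d '' (Iio N) with hFdef
        have hF : F.Finite := (finite_Iio N).image d
        have hU : Metric.ball x (r / 2) \ (F \ {x}) ∈ 𝓝 x := by
          apply IsOpen.mem_nhds
          · exact Metric.isOpen_ball.sdiff hF.diff.isClosed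
          · exact ⟨Metric.mem_ball_self (by positivity), fun h => h.2 rfl⟩
        obtain ⟨z, ⟨hz1, hz2⟩, hz3, hz4⟩ := clusterPt_principal_iff.1 hcl _ hU
        obtain ⟨k, rfl⟩ := hz3
        exact hz2 ⟨mem_image_of_mem d (hsub k hz1), hz4⟩
      have key2 : ∀ b ∈ B, ClusterPt b (𝓟 (range d \ {b})) := by
        intro b hb
        rw [← mem_closure_iff_clusterPt, Metric.mem_closure_iff]
        intro ε hε
        obtain ⟨q, hqQ, hq⟩ := Metric.mem_closure_iff.1 (hBQ b hb) (ε / 2) (by linarith)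
        rw [hf] at hqQ
        obtain ⟨m, rfl⟩ := hqQ
        obtain ⟨n, hn⟩ := exists_nat_one_div_lt (show (0:ℝ) < ε / 2 by linarith)
        set k := Nat.pair m n with hkdef
        have hbk : bseq k = f m := by
          rw [hbseq]
          simp [hkdef, Nat.unpair_pair]
        have hkd : dist (d k) (f m) < ε / 2 := by
          have h1 := hdd k
          rw [hbk] at h1
          have hkn : n ≤ k := Nat.right_le_pair m n
          have h2 : 1 / ((k : ℝ) + 1) ≤ 1 / ((n : ℝ) + 1) := by
            apply one_div_le_one_div_of_le (by positivity)
            have : (n : ℝ) ≤ (k : ℝ) := by exact_mod_cast hkn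
            linarith
          linarith
        refine ⟨d k, ⟨mem_range_self k, ?_⟩, ?_⟩
        · intro h
          rw [mem_singleton_iff] at h
          exact hdB k (h ▸ hb)
        · calc dist b (d k) ≤ dist b (f m) + dist (f m) (d k) := dist_triangle _ _ _
            _ < ε / 2 + ε / 2 := by rw [dist_comm (f m) (d k)]; exact add_lt_add hq hkd
            _ = ε := by ring
      refine ⟨range d, countable_range d, ?_, ?_⟩
      · rw [discreteTopology_subtype_iff]
        intro x hx
        rw [aux_nhds_diff_eq]
        by_contra h
        have hxB : x ∉ B := by
          obtain ⟨k, rfl⟩ := hx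
          exact hdB k
        exact key1 x hxB ⟨h⟩
      · ext x
        exact ⟨fun hx => key2 x hx, fun hx => by_contra fun hxB => key1 x hxB hx⟩
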